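/- Let b = (1/2)√(5+2√5) and c = √(5+3√5)·(5−√5)/10. Place A_1 = (0,0,0), the five points A_k (k in the inner pentagon) at distance 2b·(unit vectors at angles 2πj/5) from the z-axis with z-coordinate c, and the five outer points as the pentagon with circumradius 1/(2 sin(π/5)) at z = c rotated by π/5. Then |A_1 − P| = 1 for each inner pentagon point P, each inner point is at distance 1 from the two nearest outer points and the two second-nearest inner-pentagon neighbors as prescribed by the Grötzsch graph edges. -/

import Mathlib

open Real

private lemma dist_cyl (r₁ r₂ z₁ z₂ α β : ℝ) (p q : EuclideanSpace ℝ (Fin 3))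
    (hp : p = !₂[r₁ * Real.cos α, r₁ * Real.sin α, z₁])
    (hq : q = !₂[r₂ * Real.cos β, r₂ * Real.sin β, z₂])
    (h : r₁^2 + r₂^2 - 2*r₁*r₂*Real.cos (α - β) + (z₁ - z₂)^2 = 1) :
    dist p q = 1 := by
  rw [EuclideanSpace.dist_eq, Fin.sum_univ_three, hp, hq]
  simp only [PiLp.toLp_apply, Matrix.cons_val_zero, Matrix.cons_val_one, Matrix.head_cons,
    Matrix.cons_val_two, Matrix.tail_cons, Real.dist_eq, sq_abs]
  rw [show (r₁ * Real.cos α - r₂ * Real.cos β)^2 + (r₁ * Real.sin α - r₂ * Real.sin β)^2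
      + (z₁ - z₂)^2 = 1 from by
    rw [← h, Real.cos_sub]
    nlinarith [Real.sin_sq_add_cos_sq α, Real.sin_sq_add_cos_sq β]]
  exact Real.sqrt_one

private lemma s5 : Real.sqrt 5 ^ 2 = 5 := Real.sq_sqrt (by norm_num)

private lemma s5gt : 2 < Real.sqrt 5 := by
  nlinarith [s5, Real.sqrt_nonneg 5]

private lemma s5lt : Real.sqrt 5 < 3 := by
  nlinarith [s5, Real.sqrt_nonneg 5]

private lemma cos25 : Real.cos (2*π/5) = (Real.sqrt 5 - 1)/4 := by
  have h := Real.cos_two_mul (π/5)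
  rw [Real.cos_pi_div_five] at h
  rw [show (2*π/5 : ℝ) = 2*(π/5) by ring, h]
  nlinarith [s5]

private lemma cos35 : Real.cos (3*π/5) = -((Real.sqrt 5 - 1)/4) := by
  rw [show (3*π/5 : ℝ) = π - 2*π/5 by ring, Real.cos_pi_sub, cos25]

private lemma cos75 : Real.cos (7*π/5) = -((Real.sqrt 5 - 1)/4) := by
  rw [show (7*π/5 : ℝ) = 2*π - 3*π/5 by ring, Real.cos_two_pi_sub, cos35]

private lemma cosv1 : Real.cos (π * (3/5)) = -((Real.sqrt 5 - 1)/4) := by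
  rw [show (π * (3/5) : ℝ) = 3*π/5 by ring, cos35]

private lemma cosv2 : Real.cos (π * (-3/5)) = -((Real.sqrt 5 - 1)/4) := by
  rw [show (π * (-3/5) : ℝ) = -(3*π/5) by ring, Real.cos_neg, cos35]

private lemma cosv3 : Real.cos (π * (7/5)) = -((Real.sqrt 5 - 1)/4) := by
  rw [show (π * (7/5) : ℝ) = 7*π/5 by ring, cos75]

private lemma cosv4 : Real.cos (π * (-7/5)) = -((Real.sqrt 5 - 1)/4) := by
  rw [show (π * (-7/5) : ℝ) = -(7*π/5) by ring, Real.cos_neg, cos75]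

private lemma cosv5 : Real.cos (π * (2/5)) = (Real.sqrt 5 - 1)/4 := by
  rw [show (π * (2/5) : ℝ) = 2*π/5 by ring, cos25]

private lemma cosv6 : Real.cos (π * (-2/5)) = (Real.sqrt 5 - 1)/4 := by
  rw [show (π * (-2/5) : ℝ) = -(2*π/5) by ring, Real.cos_neg, cos25]

private lemma cosv7 : Real.cos (π * (8/5)) = (Real.sqrt 5 - 1)/4 := by
  rw [show (π * (8/5) : ℝ) = 2*π - 2*π/5 by ring, Real.cos_two_pi_sub, cos25]

private lemma sin15_pos : 0 < Real.sin (π/5) := by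
  apply Real.sin_pos_of_pos_of_lt_pi
  · positivity
  · nlinarith [Real.pi_pos]

private lemma sin15_sq : Real.sin (π/5)^2 = (10 - 2*Real.sqrt 5)/16 := by
  have h := Real.sin_sq_add_cos_sq (π/5)
  rw [Real.cos_pi_div_five] at h
  nlinarith [s5]

private lemma hcos1 : ∀ j : Fin 5,
    Real.cos (2 * π * j / 5 - (2 * π * (((j + 1) : Fin 5)) / 5 + π / 5))
      = -((Real.sqrt 5 - 1)/4) := by
  intro j
  fin_cases j <;>
    norm_num [Fin.add_def, show ((1:Fin 5):ℕ) = 1 from rfl] <;> ring_nf <;>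
    simp only [cosv1, cosv2, cosv3, cosv4] <;> ring

private lemma hcos3 : ∀ j : Fin 5,
    Real.cos (2 * π * j / 5 - (2 * π * (((j + 3) : Fin 5)) / 5 + π / 5))
      = -((Real.sqrt 5 - 1)/4) := by
  intro j
  fin_cases j <;>
    norm_num [Fin.add_def, show ((3:Fin 5):ℕ) = 3 from rfl] <;> ring_nf <;>
    simp only [cosv1, cosv2, cosv3, cosv4] <;> ring

private lemma hcoso : ∀ j : Fin 5,
    Real.cos (2 * π * j / 5 + π / 5 - (2 * π * (((j + 1) : Fin 5)) / 5 + π / 5))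
      = (Real.sqrt 5 - 1)/4 := by
  intro j
  fin_cases j <;>
    norm_num [Fin.add_def, show ((1:Fin 5):ℕ) = 1 from rfl] <;> ring_nf <;>
    simp only [cosv5, cosv6, cosv7] <;> ring

set_option maxHeartbeats 2000000 in
/-- Unit-distance embedding of the Grötzsch graph in `ℝ³`: the apex at the origin, the
five "inner" vertices on a regular pentagon of radius `2b` at height `c`, and the five
"outer" vertices on a regular pentagon of circumradius `1/(2 sin (π/5))` at height `c`,
rotated by `π/5`.  All edges of the Grötzsch graph (apex–inner, inner–outer, and the
outer 5-cycle) have length exactly `1`. -/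
theorem grotzsch_embedding
    (b c : ℝ) (hb : b = 1 / (2 * sqrt (5 + 2 * sqrt 5)))
    (hc : c = sqrt (5 + 3 * sqrt 5) * (5 - sqrt 5) / 10)
    (apex : EuclideanSpace ℝ (Fin 3)) (inner outer : Fin 5 → EuclideanSpace ℝ (Fin 3))
    (happex : apex = !₂[0, 0, 0])
    (hinner : ∀ j : Fin 5,
      inner j = !₂[2 * b * cos (2 * π * j / 5), 2 * b * sin (2 * π * j / 5), c])
    (houter : ∀ j : Fin 5,
      outer j = !₂[(1 / (2 * sin (π / 5))) * cos (2 * π * j / 5 + π / 5),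
                  (1 / (2 * sin (π / 5))) * sin (2 * π * j / 5 + π / 5), c]) :
    ∀ j : Fin 5,
      dist apex (inner j) = 1 ∧
      dist (inner j) (outer (j + 1)) = 1 ∧
      dist (inner j) (outer (j + 3)) = 1 ∧
      dist (outer j) (outer (j + 1)) = 1 := by
  have h52 : (0:ℝ) < 5 + 2*Real.sqrt 5 := by nlinarith [s5gt]
  have h53 : (0:ℝ) < 5 + 3*Real.sqrt 5 := by nlinarith [s5gt]
  have hb2 : b^2 = (5 - 2*Real.sqrt 5)/20 := by
    rw [hb, div_pow, mul_pow, Real.sq_sqrt h52.le]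
    rw [div_eq_div_iff (by positivity) (by norm_num)]
    nlinarith [s5]
  have hc2 : c^2 = 2*Real.sqrt 5/5 := by
    rw [hc, div_pow, mul_pow, Real.sq_sqrt h53.le]
    rw [div_eq_div_iff (by norm_num) (by norm_num)]
    nlinarith [s5]
  have hR2 : (1 / (2 * Real.sin (π/5)))^2 = (5 + Real.sqrt 5)/10 := by
    rw [div_pow, mul_pow, sin15_sq]
    rw [div_eq_div_iff (by nlinarith [s5lt]) (by norm_num)]
    nlinarith [s5]
  have hkey : Real.sqrt (5 + 2*Real.sqrt 5) * Real.sin (π/5) = (5 + Real.sqrt 5)/4 := by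
    have h1 : (Real.sqrt (5 + 2*Real.sqrt 5) * Real.sin (π/5))^2
        = ((5 + Real.sqrt 5)/4)^2 := by
      rw [mul_pow, Real.sq_sqrt h52.le, sin15_sq]
      nlinarith [s5]
    have h2 : 0 ≤ Real.sqrt (5 + 2*Real.sqrt 5) * Real.sin (π/5) :=
      mul_nonneg (Real.sqrt_nonneg _) sin15_pos.le
    have h3 : (0:ℝ) ≤ (5 + Real.sqrt 5)/4 := by nlinarith [s5gt]
    nlinarith [h1, h2, h3]
  have hbR : b * (1 / (2 * Real.sin (π/5))) * (Real.sqrt 5 - 1)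
      = (3*Real.sqrt 5 - 5)/10 := by
    have hsin := sin15_pos
    have hrt : (0:ℝ) < Real.sqrt (5 + 2*Real.sqrt 5) := Real.sqrt_pos.mpr h52
    rw [hb]
    field_simp
    nlinarith [hkey, s5, hsin, hrt]
  intro j
  refine ⟨?_, ?_, ?_, ?_⟩
  · refine dist_cyl 0 (2*b) 0 c 0 (2 * π * j / 5) _ _ ?_ (hinner j) ?_
    · rw [happex]; norm_num
    · rw [show ((0:ℝ) - 2 * π * j / 5) = -(2 * π * j / 5) by ring]
      linear_combination 4*hb2 + hc2
  · refine dist_cyl (2*b) (1 / (2 * Real.sin (π/5))) c c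
      (2 * π * j / 5) (2 * π * ((j + 1 : Fin 5)) / 5 + π / 5) _ _
      (hinner j) (houter (j+1)) ?_
    rw [hcos1 j]
    linear_combination 4*hb2 + hR2 + hbR
  · refine dist_cyl (2*b) (1 / (2 * Real.sin (π/5))) c c
      (2 * π * j / 5) (2 * π * ((j + 3 : Fin 5)) / 5 + π / 5) _ _
      (hinner j) (houter (j+3)) ?_
    rw [hcos3 j]
    linear_combination 4*hb2 + hR2 + hbR
  · refine dist_cyl (1 / (2 * Real.sin (π/5))) (1 / (2 * Real.sin (π/5))) c c
      (2 * π * j / 5 + π / 5) (2 * π * ((j + 1 : Fin 5)) / 5 + π / 5) _ _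
      (houter j) (houter (j+1)) ?_
    rw [hcoso j]
    linear_combination ((5 - Real.sqrt 5)/2) * hR2 - (1/20) * s5
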